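/- Suppose ρ̄ ∈ C¹ on the closure of a bounded domain Ω ⊂ ℝ³ with inf ρ̄ > 0 and ρ̄'(x₃⁰) > 0 at some point of Ω (ρ̄ depending only on x₃). Then there exist positive constants c₁, c₂ (depending on g, ρ̄, μ, Ω) such that α(s) ≥ c₁ − s c₂ for all s > 0, where α(s) = sup_{v ∈ 𝒜} E(v, s). In particular α(s) > 0 for all sufficiently small s > 0. -/

import Mathlib

open MeasureTheory Real
noncomputable section

abbrev E3 : Type := EuclideanSpace ℝ (Fin 3)

/-- Partial derivative in direction `i`. -/
def pd (i : Fin 3) (f : E3 → ℝ) (x : E3) : ℝ :=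
  fderiv ℝ f x (EuclideanSpace.single i 1)

/-- Divergence of a vector field. -/
def div3 (v : E3 → Fin 3 → ℝ) (x : E3) : ℝ :=
  ∑ i : Fin 3, pd i (fun y => v y i) x

/-- Squared Frobenius norm of the gradient `|∇v|²`. -/
def gradSq (v : E3 → Fin 3 → ℝ) (x : E3) : ℝ :=
  ∑ i : Fin 3, ∑ j : Fin 3, (pd j (fun y => v y i) x) ^ 2

/-- The functional `E₁(v)`. -/
def E1 (g a : ℝ) (ρ' ρ p : E3 → ℝ) (Ω : Set E3) (v : E3 → Fin 3 → ℝ) : ℝ :=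
  ∫ x in Ω, (g * ρ' x * (v x 2) ^ 2 +
    (2 * g * ρ x * (v x 2) - (1 + a) * p x * div3 v x) * div3 v x)

/-- The dissipation functional `E₂(v)`. -/
def E2 (μ μ₀ : ℝ) (Ω : Set E3) (v : E3 → Fin 3 → ℝ) : ℝ :=
  ∫ x in Ω, (μ * gradSq v x + μ₀ * (div3 v x) ^ 2)

/-- The full energy `E(v,s) = E₁(v) − s E₂(v)`. -/
def Efun (g a μ μ₀ : ℝ) (ρ' ρ p : E3 → ℝ) (Ω : Set E3) (s : ℝ)
    (v : E3 → Fin 3 → ℝ) : ℝ :=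
  E1 g a ρ' ρ p Ω v - s * E2 μ μ₀ Ω v

/-- The admissible set `𝒜 = { v ∈ H₀¹ : ∫ ρ̄|v|² = 1 }`, where membership in
`H₀¹(Ω;ℝ³)` is described by the predicate `H01`. -/
def Adm (H01 : (E3 → Fin 3 → ℝ) → Prop) (ρ : E3 → ℝ) (Ω : Set E3) :
    Set (E3 → Fin 3 → ℝ) :=
  { v | H01 v ∧ ∫ x in Ω, ρ x * (∑ i : Fin 3, (v x i) ^ 2) = 1 }

/-- `α(s) = sup_{v ∈ 𝒜} E(v,s)`. -/
def alpha (H01 : (E3 → Fin 3 → ℝ) → Prop) (g a μ μ₀ : ℝ) (ρ' ρ p : E3 → ℝ)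
    (Ω : Set E3) (s : ℝ) : ℝ :=
  sSup ((fun v => Efun g a μ μ₀ ρ' ρ p Ω s v) '' Adm H01 ρ Ω)

section Aux

lemma proj_hasFDerivAt (i : Fin 3) (x : E3) :
    HasFDerivAt (fun y : E3 => y i) (EuclideanSpace.proj i : E3 →L[ℝ] ℝ) x := by
  have h : (fun y : E3 => y i) = ⇑(EuclideanSpace.proj (𝕜 := ℝ) i) := by
    funext y; simp [PiLp.proj_apply]
  rw [h]
  exact ContinuousLinearMap.hasFDerivAt _

lemma contDiff_coord (i : Fin 3) {n : WithTop ℕ∞} : ContDiff ℝ n fun y : E3 => y i := by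
  have h : (fun y : E3 => y i) = ⇑(EuclideanSpace.proj (𝕜 := ℝ) i) := by
    funext y; simp [PiLp.proj_apply]
  rw [h]
  exact ContinuousLinearMap.contDiff _

lemma hasFDerivAt_prod3 (f g h : ℝ → ℝ) (hf : Differentiable ℝ f) (hg : Differentiable ℝ g)
    (hh : Differentiable ℝ h) (x : E3) :
    HasFDerivAt (fun y : E3 => f (y 0) * g (y 1) * h (y 2))
      ((f (x 0) * g (x 1)) • ((deriv h (x 2)) • (EuclideanSpace.proj (2:Fin 3) : E3 →L[ℝ] ℝ))
        + h (x 2) • ((f (x 0)) • ((deriv g (x 1)) • (EuclideanSpace.proj (1:Fin 3) : E3 →L[ℝ] ℝ))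
            + g (x 1) • ((deriv f (x 0)) • (EuclideanSpace.proj (0:Fin 3) : E3 →L[ℝ] ℝ)))) x := by
  have h0 : HasFDerivAt (fun y : E3 => f (y 0))
      ((deriv f (x 0)) • (EuclideanSpace.proj (0:Fin 3) : E3 →L[ℝ] ℝ)) x :=
    ((hf (x 0)).hasDerivAt).comp_hasFDerivAt x (proj_hasFDerivAt 0 x)
  have h1 : HasFDerivAt (fun y : E3 => g (y 1))
      ((deriv g (x 1)) • (EuclideanSpace.proj (1:Fin 3) : E3 →L[ℝ] ℝ)) x :=
    ((hg (x 1)).hasDerivAt).comp_hasFDerivAt x (proj_hasFDerivAt 1 x)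
  have h2 : HasFDerivAt (fun y : E3 => h (y 2))
      ((deriv h (x 2)) • (EuclideanSpace.proj (2:Fin 3) : E3 →L[ℝ] ℝ)) x :=
    ((hh (x 2)).hasDerivAt).comp_hasFDerivAt x (proj_hasFDerivAt 2 x)
  exact (h0.mul h1).mul h2

lemma pd_prod3 (f g h : ℝ → ℝ) (hf : Differentiable ℝ f) (hg : Differentiable ℝ g)
    (hh : Differentiable ℝ h) (x : E3) (j : Fin 3) :
    pd j (fun y : E3 => f (y 0) * g (y 1) * h (y 2)) x =
      deriv f (x 0) * g (x 1) * h (x 2) * (EuclideanSpace.single j (1:ℝ) 0)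
      + f (x 0) * deriv g (x 1) * h (x 2) * (EuclideanSpace.single j (1:ℝ) 1)
      + f (x 0) * g (x 1) * deriv h (x 2) * (EuclideanSpace.single j (1:ℝ) 2) := by
  unfold pd
  rw [(hasFDerivAt_prod3 f g h hf hg hh x).fderiv]
  simp [ContinuousLinearMap.add_apply, ContinuousLinearMap.smul_apply, PiLp.proj_apply]
  ring

lemma pd_const_mul (c : ℝ) (F : E3 → ℝ) (x : E3) (j : Fin 3)
    (hF : DifferentiableAt ℝ F x) :
    pd j (fun y => c * F y) x = c * pd j F x := by
  unfold pd
  rw [fderiv_const_mul hF]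
  simp

lemma pd_neg (F : E3 → ℝ) (x : E3) (j : Fin 3) :
    pd j (fun y => -F y) x = -pd j F x := by
  unfold pd
  rw [fderiv_fun_neg]
  simp

lemma pos_setIntegral (Ω : Set E3) (hΩo : IsOpen Ω) (f : E3 → ℝ) (hf : Continuous f)
    (hnn : ∀ x, 0 ≤ f x) (hint : IntegrableOn f Ω) (y : E3) (hy : y ∈ Ω) (hfy : 0 < f y) :
    0 < ∫ x in Ω, f x := by
  have hU : IsOpen (Ω ∩ {x | f y / 2 < f x}) := hΩo.inter (isOpen_lt continuous_const hf)
  have hyU : y ∈ Ω ∩ {x | f y / 2 < f x} := ⟨hy, by simp only [Set.mem_setOf_eq]; linarith⟩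
  obtain ⟨ε, hε, hball⟩ := Metric.isOpen_iff.1 hU y hyU
  have hsub : Metric.ball y ε ⊆ Ω := fun z hz => (hball hz).1
  have h1 : ∫ x in Metric.ball y ε, f x ≤ ∫ x in Ω, f x := by
    apply setIntegral_mono_set hint
    · exact Filter.Eventually.of_forall fun x => hnn x
    · exact HasSubset.Subset.eventuallyLE hsub
  have h2 : (f y / 2) * (volume (Metric.ball y ε)).toReal ≤ ∫ x in Metric.ball y ε, f x := by
    apply setIntegral_ge_of_const_le_real measurableSet_ball measure_ball_lt_top.ne
    · exact fun x hx => le_of_lt (hball hx).2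
    · exact hint.mono_set hsub
  have h3 : 0 < (volume (Metric.ball y ε)).toReal := by
    apply ENNReal.toReal_pos
    · exact (Metric.measure_ball_pos volume y hε).ne'
    · exact measure_ball_lt_top.ne
  nlinarith

lemma bump_facts {c : ℝ} (b : ContDiffBump c) (t : ℝ) (h : b.rOut < |t - c|) :
    b t = 0 ∧ deriv (⇑b) t = 0 := by
  have hd : b.rOut ≤ dist t c := by rw [Real.dist_eq]; linarith
  refine ⟨b.zero_of_le_dist hd, ?_⟩
  have hts : t ∉ tsupport ⇑b := by
    rw [b.tsupport_eq, Metric.mem_closedBall, Real.dist_eq]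
    linarith
  exact Function.notMem_support.1 fun hs => hts (support_deriv_subset hs)

/-- The divergence-free test field built from three bump profiles. -/
def vf (f0 f1 f2 : ℝ → ℝ) : E3 → Fin 3 → ℝ := fun x i =>
  if i = 0 then f0 (x 0) * f1 (x 1) * deriv f2 (x 2)
  else if i = 2 then -(deriv f0 (x 0) * f1 (x 1) * f2 (x 2)) else 0

lemma vf_comp0 (f0 f1 f2 : ℝ → ℝ) :
    (fun y => vf f0 f1 f2 y 0) = fun y : E3 => f0 (y 0) * f1 (y 1) * deriv f2 (y 2) := by
  funext y; simp [vf]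

lemma vf_comp1 (f0 f1 f2 : ℝ → ℝ) :
    (fun y => vf f0 f1 f2 y 1) = fun _ : E3 => (0:ℝ) := by
  funext y; simp [vf]

lemma vf_comp2 (f0 f1 f2 : ℝ → ℝ) :
    (fun y => vf f0 f1 f2 y 2) = fun y : E3 => -(deriv f0 (y 0) * f1 (y 1) * f2 (y 2)) := by
  funext y; simp [vf]

lemma vf_div3 (f0 f1 f2 : ℝ → ℝ) (h0 : ContDiff ℝ (↑(⊤:ℕ∞)) f0)
    (h1 : ContDiff ℝ (↑(⊤:ℕ∞)) f1) (h2 : ContDiff ℝ (↑(⊤:ℕ∞)) f2) (x : E3) :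
    div3 (vf f0 f1 f2) x = 0 := by
  have hd0 := (contDiff_infty_iff_deriv.1 h0).2
  have hd2 := (contDiff_infty_iff_deriv.1 h2).2
  have D0 : Differentiable ℝ f0 := (contDiff_infty_iff_deriv.1 h0).1
  have D1 : Differentiable ℝ f1 := (contDiff_infty_iff_deriv.1 h1).1
  have D2 : Differentiable ℝ f2 := (contDiff_infty_iff_deriv.1 h2).1
  have Dd0 : Differentiable ℝ (deriv f0) := (contDiff_infty_iff_deriv.1 hd0).1
  have Dd2 : Differentiable ℝ (deriv f2) := (contDiff_infty_iff_deriv.1 hd2).1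
  have e0 : pd 0 (fun y => vf f0 f1 f2 y 0) x
      = deriv f0 (x 0) * f1 (x 1) * deriv f2 (x 2) := by
    rw [vf_comp0, pd_prod3 _ _ _ D0 D1 Dd2]
    simp [EuclideanSpace.single_apply]
  have e1 : pd 1 (fun y => vf f0 f1 f2 y 1) x = 0 := by
    rw [vf_comp1]; unfold pd; simp
  have e2 : pd 2 (fun y => vf f0 f1 f2 y 2) x
      = -(deriv f0 (x 0) * f1 (x 1) * deriv f2 (x 2)) := by
    rw [vf_comp2, pd_neg, pd_prod3 _ _ _ Dd0 D1 D2]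
    simp [EuclideanSpace.single_apply]
  simp [div3, Fin.sum_univ_three, e0, e1, e2]

end Aux

theorem alpha_lower_bound
    (Ω : Set E3) (hΩo : IsOpen Ω) (hΩb : Bornology.IsBounded Ω)
    (g a μ μ₀ : ℝ) (hg : 0 < g) (ha : 0 < a) (hμ : 0 < μ) (hμ₀ : 0 ≤ μ₀)
    -- the density profile `ρ̄(x) = R(x₃)` depends only on the height `x₃`
    (R : ℝ → ℝ) (hR : ContDiff ℝ 1 R)
    (hRpos : ∀ x ∈ closure Ω, 0 < R (x 2))
    (x₀ : E3) (hx₀ : x₀ ∈ Ω) (hR' : 0 < deriv R (x₀ 2))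
    (p : E3 → ℝ) (hpc : ContinuousOn p (closure Ω)) (hppos : ∀ x ∈ closure Ω, 0 < p x)
    (H01 : (E3 → Fin 3 → ℝ) → Prop)  -- membership in `H₀¹(Ω;ℝ³)`
    -- `H₀¹` contains all `C¹` fields compactly supported inside `Ω`
    (hH01 : ∀ w : E3 → Fin 3 → ℝ, (∀ i : Fin 3, ContDiff ℝ 1 fun y => w y i) →
      closure {x | w x ≠ 0} ⊆ Ω → H01 w)
    (hbdd : ∀ s > (0:ℝ), BddAbove
      ((fun v => Efun g a μ μ₀ (fun x => deriv R (x 2)) (fun x => R (x 2)) p Ω s v) ''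
        Adm H01 (fun x => R (x 2)) Ω)) :
    ∃ c₁ c₂ : ℝ, 0 < c₁ ∧ 0 < c₂ ∧
      ∀ s > (0:ℝ), c₁ - s * c₂ ≤
        alpha H01 g a μ μ₀ (fun x => deriv R (x 2)) (fun x => R (x 2)) p Ω s := by
  classical
  have hRd : Continuous (deriv R) := hR.continuous_deriv le_rfl
  have hFc : Continuous fun x : E3 => deriv R (x 2) := hRd.comp (PiLp.continuous_apply (p := 2) (β := fun _ : Fin 3 => ℝ) 2)
  have hUopen : IsOpen (Ω ∩ {x | 0 < deriv R (x 2)}) :=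
    hΩo.inter (isOpen_lt continuous_const hFc)
  have hx₀U : x₀ ∈ Ω ∩ {x | 0 < deriv R (x 2)} := ⟨hx₀, hR'⟩
  obtain ⟨r, hr, hball⟩ := Metric.isOpen_iff.1 hUopen x₀ hx₀U
  set δ := r / 4 with hδdef
  have hδpos : 0 < δ := by positivity
  set K : Set E3 := {x | ∀ i, |x i - x₀ i| ≤ δ} with hKdef
  have hKball : K ⊆ Metric.ball x₀ r := by
    intro x hx
    have hb : ∀ i, dist (x i) (x₀ i) ^ 2 ≤ δ ^ 2 := fun i => by
      rw [Real.dist_eq]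
      exact pow_le_pow_left₀ (abs_nonneg _) (hx i) 2
    rw [Metric.mem_ball, EuclideanSpace.dist_eq, Real.sqrt_lt' hr]
    have := hb 0; have := hb 1; have := hb 2
    rw [Fin.sum_univ_three]
    nlinarith
  have hKU : K ⊆ Ω ∩ {x | 0 < deriv R (x 2)} := fun x hx => hball (hKball hx)
  have hKΩ : K ⊆ Ω := fun x hx => (hKU hx).1
  have hKclosed : IsClosed K := by
    have hKe : K = ⋂ i, {x : E3 | |x i - x₀ i| ≤ δ} := by
      ext x; simp [hKdef, Set.mem_iInter]
    rw [hKe]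
    have hcoord : ∀ i : Fin 3, Continuous fun x : E3 => x i := fun i => PiLp.continuous_apply (p := 2) (β := fun _ : Fin 3 => ℝ) i
    exact isClosed_iInter fun i =>
      isClosed_le (((hcoord i).sub continuous_const).abs) continuous_const
  have hKcomp : IsCompact K :=
    (isCompact_closedBall x₀ r).of_isClosed_subset hKclosed
      (hKball.trans Metric.ball_subset_closedBall)
  -- the bump profiles
  set b0 : ContDiffBump (x₀ 0) := ⟨δ/2, δ, by positivity, by linarith⟩ with hb0def
  set b1 : ContDiffBump (x₀ 1) := ⟨δ/2, δ, by positivity, by linarith⟩ with hb1def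
  set b2 : ContDiffBump (x₀ 2) := ⟨δ/2, δ, by positivity, by linarith⟩ with hb2def
  have hro0 : b0.rOut = δ := rfl
  have hro1 : b1.rOut = δ := rfl
  have hro2 : b2.rOut = δ := rfl
  set u : E3 → Fin 3 → ℝ := vf ⇑b0 ⇑b1 ⇑b2 with hudef
  -- vanishing outside K
  have hz : ∀ x : E3, x ∉ K → ∀ i : Fin 3, u x i = 0 := by
    intro x hx i
    have hx' : ∃ j : Fin 3, δ < |x j - x₀ j| := by
      by_contra hc; push_neg at hc; exact hx fun j => hc j
    obtain ⟨j, hj⟩ := hx'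
    fin_cases j
    · obtain ⟨hA, hB⟩ := bump_facts b0 (x 0) (by rw [hro0]; exact hj)
      fin_cases i <;> simp [hudef, vf, hA, hB]
    · obtain ⟨hA, hB⟩ := bump_facts b1 (x 1) (by rw [hro1]; exact hj)
      fin_cases i <;> simp [hudef, vf, hA, hB]
    · obtain ⟨hA, hB⟩ := bump_facts b2 (x 2) (by rw [hro2]; exact hj)
      fin_cases i <;> simp [hudef, vf, hA, hB]
  -- a point where deriv b0 ≠ 0
  have hDb0 : Differentiable ℝ ⇑b0 := (contDiff_infty_iff_deriv.1 b0.contDiff).1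
  have ht : ∃ t : ℝ, deriv (⇑b0) t ≠ 0 := by
    by_contra hc; push_neg at hc
    have hconst := is_const_of_deriv_eq_zero hDb0 hc (x₀ 0) (x₀ 0 + 2*δ)
    have h1 : b0 (x₀ 0) = 1 :=
      b0.one_of_mem_closedBall (by rw [Metric.mem_closedBall, dist_self]; exact b0.rIn_pos.le)
    have h2 : b0 (x₀ 0 + 2*δ) = 0 := by
      apply b0.zero_of_le_dist
      rw [Real.dist_eq, hro0]
      rw [show x₀ 0 + 2*δ - x₀ 0 = 2*δ by ring, abs_of_pos (by linarith)]
      linarith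
    rw [h1, h2] at hconst
    norm_num at hconst
  obtain ⟨t, htne⟩ := ht
  have htmem : |t - x₀ 0| ≤ δ := by
    have hts : t ∈ tsupport ⇑b0 := support_deriv_subset (Function.mem_support.2 htne)
    rw [b0.tsupport_eq, Metric.mem_closedBall, Real.dist_eq, hro0] at hts
    exact hts
  -- the witness point
  set y : E3 := !₂[t, x₀ 1, x₀ 2] with hydef
  have hy0 : y 0 = t := rfl
  have hy1 : y 1 = x₀ 1 := rfl
  have hy2 : y 2 = x₀ 2 := rfl
  have hyK : y ∈ K := by
    intro i
    fin_cases i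
    · simpa [hydef] using htmem
    · simp [hydef, hδpos.le]
    · simp [hydef, hδpos.le]
  have hyΩ : y ∈ Ω := hKΩ hyK
  have hyF : 0 < deriv R (y 2) := (hKU hyK).2
  have hb1one : b1 (x₀ 1) = 1 :=
    b1.one_of_mem_closedBall (by rw [Metric.mem_closedBall, dist_self]; exact b1.rIn_pos.le)
  have hb2one : b2 (x₀ 2) = 1 :=
    b2.one_of_mem_closedBall (by rw [Metric.mem_closedBall, dist_self]; exact b2.rIn_pos.le)
  have hu2y : u y 2 = -(deriv (⇑b0) t) := by
    have := congrFun (vf_comp2 ⇑b0 ⇑b1 ⇑b2) y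
    rw [hudef]
    rw [this, hy0, hy1, hy2, hb1one, hb2one]
    ring
  have hu2ne : u y 2 ≠ 0 := by rw [hu2y]; simpa using htne
  -- continuity of components
  have hcont0 : Continuous fun x : E3 => (⇑b0 : ℝ → ℝ) (x 0) :=
    b0.continuous.comp (PiLp.continuous_apply (p := 2) (β := fun _ : Fin 3 => ℝ) 0)
  have hcont1 : Continuous fun x : E3 => (⇑b1 : ℝ → ℝ) (x 1) :=
    b1.continuous.comp (PiLp.continuous_apply (p := 2) (β := fun _ : Fin 3 => ℝ) 1)
  have hcont2 : Continuous fun x : E3 => (⇑b2 : ℝ → ℝ) (x 2) :=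
    b2.continuous.comp (PiLp.continuous_apply (p := 2) (β := fun _ : Fin 3 => ℝ) 2)
  have hcd0' : Continuous (deriv ⇑b0) := (contDiff_infty_iff_deriv.1 b0.contDiff).2.continuous
  have hcd2' : Continuous (deriv ⇑b2) := (contDiff_infty_iff_deriv.1 b2.contDiff).2.continuous
  have hcontd0 : Continuous fun x : E3 => deriv (⇑b0) (x 0) := hcd0'.comp (PiLp.continuous_apply (p := 2) (β := fun _ : Fin 3 => ℝ) 0)
  have hcontd2 : Continuous fun x : E3 => deriv (⇑b2) (x 2) := hcd2'.comp (PiLp.continuous_apply (p := 2) (β := fun _ : Fin 3 => ℝ) 2)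
  have hcont : ∀ i : Fin 3, Continuous fun x : E3 => u x i := by
    intro i
    fin_cases i
    · exact (show Continuous fun x : E3 => ⇑b0 (x 0) * ⇑b1 (x 1) * deriv (⇑b2) (x 2) from
        (hcont0.mul hcont1).mul hcontd2)
    · exact (show Continuous fun _ : E3 => (0:ℝ) from continuous_const)
    · exact (show Continuous fun x : E3 => -(deriv (⇑b0) (x 0) * ⇑b1 (x 1) * ⇑b2 (x 2)) from
        ((hcontd0.mul hcont1).mul hcont2).neg)
  -- C¹ regularity of components
  have hone : (1 : WithTop ℕ∞) ≤ (↑(⊤:ℕ∞) : WithTop ℕ∞) := by exact_mod_cast le_top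
  have hcd : ∀ i : Fin 3, ContDiff ℝ 1 fun y : E3 => u y i := by
    intro i
    fin_cases i
    · exact (show ContDiff ℝ 1 fun x : E3 => ⇑b0 (x 0) * ⇑b1 (x 1) * deriv (⇑b2) (x 2) from
        (((b0.contDiff.of_le hone).comp (contDiff_coord 0)).mul
        ((b1.contDiff.of_le hone).comp (contDiff_coord 1))).mul
        (((contDiff_infty_iff_deriv.1 b2.contDiff).2.of_le hone).comp (contDiff_coord 2)))
    · exact (show ContDiff ℝ 1 fun _ : E3 => (0:ℝ) from contDiff_const)
    · exact (show ContDiff ℝ 1 fun x : E3 => -(deriv (⇑b0) (x 0) * ⇑b1 (x 1) * ⇑b2 (x 2)) from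
        (((((contDiff_infty_iff_deriv.1 b0.contDiff).2.of_le hone).comp
        (contDiff_coord 0)).mul
        ((b1.contDiff.of_le hone).comp (contDiff_coord 1))).mul
        ((b2.contDiff.of_le hone).comp (contDiff_coord 2))).neg)
  -- normalization integral
  set fI : E3 → ℝ := fun x => R (x 2) * ∑ i : Fin 3, (u x i)^2 with hfIdef
  have hfIc : Continuous fI :=
    (hR.continuous.comp (PiLp.continuous_apply (p := 2) (β := fun _ : Fin 3 => ℝ) 2)).mul
      (continuous_finset_sum _ fun i _ => (hcont i).pow 2)
  have hfI0 : ∀ x ∉ K, fI x = 0 := by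
    intro x hx
    rw [hfIdef]
    simp only
    rw [Finset.sum_eq_zero fun i _ => by rw [hz x hx i]; ring]
    ring
  have hfInn : ∀ x, 0 ≤ fI x := by
    intro x
    by_cases hx : x ∈ K
    · exact mul_nonneg (hRpos x (subset_closure (hKΩ hx))).le
        (Finset.sum_nonneg fun i _ => sq_nonneg _)
    · rw [hfI0 x hx]
  have hfIint : IntegrableOn fI Ω volume :=
    (hfIc.integrable_of_hasCompactSupport
      (HasCompactSupport.intro hKcomp hfI0)).integrableOn
  have hfIy : 0 < fI y := by
    apply mul_pos (hRpos y (subset_closure hyΩ))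
    rw [Fin.sum_univ_three]
    have h2 : 0 < (u y 2)^2 := by positivity
    nlinarith [sq_nonneg (u y 0), sq_nonneg (u y 1)]
  have hI : 0 < ∫ x in Ω, fI x := pos_setIntegral Ω hΩo fI hfIc hfInn hfIint y hyΩ hfIy
  set I := ∫ x in Ω, fI x with hIdef
  set l : ℝ := (Real.sqrt I)⁻¹ with hldef
  have hlpos : 0 < l := by rw [hldef]; positivity
  have hl2 : l^2 * I = 1 := by
    rw [hldef, inv_pow, Real.sq_sqrt hI.le]
    exact inv_mul_cancel₀ hI.ne'
  -- the normalized field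
  set w : E3 → Fin 3 → ℝ := fun x i => l * u x i with hwdef
  have hwcd : ∀ i : Fin 3, ContDiff ℝ 1 fun y : E3 => w y i :=
    fun i => contDiff_const.mul (hcd i)
  have hwsupp : closure {x | w x ≠ 0} ⊆ Ω := by
    refine (closure_minimal ?_ hKclosed).trans hKΩ
    intro x hx
    by_contra hxK
    apply hx
    funext i
    rw [hwdef]
    simp only [Pi.zero_apply]
    rw [hz x hxK i]
    ring
  have hnorm : ∫ x in Ω, R (x 2) * ∑ i : Fin 3, (w x i)^2 = 1 := by
    have hpt : ∀ x : E3, R (x 2) * ∑ i : Fin 3, (w x i)^2 = l^2 * fI x := by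
      intro x
      rw [hwdef, hfIdef]
      simp only
      rw [show (∑ i : Fin 3, (l * u x i)^2) = l^2 * ∑ i : Fin 3, (u x i)^2 by
        rw [Finset.mul_sum]; exact Finset.sum_congr rfl fun i _ => by ring]
      ring
    simp only [hpt]
    rw [integral_const_mul, ← hIdef, hl2]
  -- divergence-free
  have hdivu : ∀ x, div3 u x = 0 := by
    intro x
    rw [hudef]
    exact vf_div3 _ _ _ b0.contDiff b1.contDiff b2.contDiff x
  have hdivw : ∀ x, div3 w x = 0 := by
    intro x
    have hpd : ∀ i : Fin 3, pd i (fun y => w y i) x = l * pd i (fun y => u y i) x := by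
      intro i
      rw [hwdef]
      exact pd_const_mul l _ x i ((hcd i).differentiable one_ne_zero x)
    have : div3 w x = l * div3 u x := by
      simp only [div3, Fin.sum_univ_three, hpd 0, hpd 1, hpd 2]
      ring
    rw [this, hdivu]; ring
  -- the positive part of the energy
  set fJ : E3 → ℝ := fun x => deriv R (x 2) * (u x 2)^2 with hfJdef
  have hfJc : Continuous fJ := hFc.mul ((hcont 2).pow 2)
  have hfJ0 : ∀ x ∉ K, fJ x = 0 := by
    intro x hx
    rw [hfJdef]
    simp only
    rw [hz x hx 2]
    ring
  have hfJnn : ∀ x, 0 ≤ fJ x := by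
    intro x
    by_cases hx : x ∈ K
    · exact mul_nonneg (hKU hx).2.le (sq_nonneg _)
    · rw [hfJ0 x hx]
  have hfJint : IntegrableOn fJ Ω volume :=
    (hfJc.integrable_of_hasCompactSupport
      (HasCompactSupport.intro hKcomp hfJ0)).integrableOn
  have hfJy : 0 < fJ y := mul_pos hyF (by positivity)
  have hJ : 0 < ∫ x in Ω, fJ x := pos_setIntegral Ω hΩo fJ hfJc hfJnn hfJint y hyΩ hfJy
  set J := ∫ x in Ω, fJ x with hJdef
  -- the value of E₁ at w
  have hE1 : E1 g a (fun x => deriv R (x 2)) (fun x => R (x 2)) p Ω w = g * l^2 * J := by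
    unfold E1
    have hpt : ∀ x : E3,
        g * deriv R (x 2) * (w x 2)^2 +
          (2 * g * R (x 2) * (w x 2) - (1 + a) * p x * div3 w x) * div3 w x
          = (g * l^2) * fJ x := by
      intro x
      rw [hdivw x, hfJdef]
      simp only
      rw [show w x 2 = l * u x 2 from rfl]
      ring
    simp only [hpt]
    rw [integral_const_mul, ← hJdef]
  have hc₁pos : 0 < g * l^2 * J := by positivity
  have hc₂pos : 0 < max (E2 μ μ₀ Ω w) 0 + 1 := by
    have := le_max_right (E2 μ μ₀ Ω w) 0
    linarith
  refine ⟨g * l^2 * J, max (E2 μ μ₀ Ω w) 0 + 1, hc₁pos, hc₂pos, ?_⟩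
  intro s hs
  have hwAdm : w ∈ Adm H01 (fun x => R (x 2)) Ω := ⟨hH01 w hwcd hwsupp, hnorm⟩
  have hmem : Efun g a μ μ₀ (fun x => deriv R (x 2)) (fun x => R (x 2)) p Ω s w ∈
      ((fun v => Efun g a μ μ₀ (fun x => deriv R (x 2)) (fun x => R (x 2)) p Ω s v) ''
        Adm H01 (fun x => R (x 2)) Ω) := ⟨w, hwAdm, rfl⟩
  have hle := le_csSup (hbdd s hs) hmem
  refine le_trans ?_ hle
  unfold Efun
  rw [hE1]
  have hE2le : E2 μ μ₀ Ω w ≤ max (E2 μ μ₀ Ω w) 0 + 1 := by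
    have := le_max_left (E2 μ μ₀ Ω w) 0
    linarith
  have := mul_le_mul_of_nonneg_left hE2le hs.le
  linarith
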